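/- For any y ∈ H_s with S²(y) = y and y invertible, the element g = S(y)y⁻¹ is group-like in the weak Hopf algebra H. -/

import Mathlib

open TensorProduct

/-- A weak Hopf algebra over a field `k` (Böhm–Nill–Szlachányi):
an algebra and coalgebra with multiplicative comultiplication, the weak
unit/counit axioms, and an antipode. -/
structure WeakHopf (k H : Type*) [Field k] [Ring H] [Algebra k H] where
  comul : H →ₗ[k] H ⊗[k] H
  counit : H →ₗ[k] k
  antipode : H →ₗ[k] H
  coassoc : ∀ h : H,
    (TensorProduct.assoc k H H H) ((TensorProduct.map comul LinearMap.id) (comul h)) =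
      (TensorProduct.map LinearMap.id comul) (comul h)
  counit_comul : ∀ h : H,
    (TensorProduct.lid k H) ((TensorProduct.map counit LinearMap.id) (comul h)) = h
  comul_counit : ∀ h : H,
    (TensorProduct.rid k H) ((TensorProduct.map LinearMap.id counit) (comul h)) = h
  comul_mul : ∀ a b : H, comul (a * b) = comul a * comul b
  -- (Δ⊗id)Δ(1) = (Δ(1)⊗1)(1⊗Δ(1)) = (1⊗Δ(1))(Δ(1)⊗1)
  weak_unit_left :
    (TensorProduct.map comul LinearMap.id) (comul 1) =
      (comul 1 ⊗ₜ[k] (1 : H)) *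
        ((TensorProduct.assoc k H H H).symm ((1 : H) ⊗ₜ[k] comul 1))
  weak_unit_right :
    (TensorProduct.map comul LinearMap.id) (comul 1) =
      ((TensorProduct.assoc k H H H).symm ((1 : H) ⊗ₜ[k] comul 1)) *
        (comul 1 ⊗ₜ[k] (1 : H))
  -- ε(fgh) = ε(fg₁)ε(g₂h) = ε(fg₂)ε(g₁h)
  weak_counit_left : ∀ f g h : H,
    counit (f * g * h) =
      (TensorProduct.lid k k)
        ((TensorProduct.map (counit ∘ₗ LinearMap.mulLeft k f)
          (counit ∘ₗ LinearMap.mulRight k h)) (comul g))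
  weak_counit_right : ∀ f g h : H,
    counit (f * g * h) =
      (TensorProduct.lid k k)
        ((TensorProduct.map (counit ∘ₗ LinearMap.mulLeft k f)
          (counit ∘ₗ LinearMap.mulRight k h)) ((TensorProduct.comm k H H) (comul g)))
  -- h₁S(h₂) = ε(1₁h)1₂  (target counital map)
  antipode_right : ∀ h : H,
    (LinearMap.mul' k H) ((TensorProduct.map LinearMap.id antipode) (comul h)) =
      (TensorProduct.lid k H)
        ((TensorProduct.map (counit ∘ₗ LinearMap.mulRight k h) LinearMap.id) (comul 1))
  -- S(h₁)h₂ = 1₁ε(h1₂)  (source counital map)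
  antipode_left : ∀ h : H,
    (LinearMap.mul' k H) ((TensorProduct.map antipode LinearMap.id) (comul h)) =
      (TensorProduct.rid k H)
        ((TensorProduct.map LinearMap.id (counit ∘ₗ LinearMap.mulLeft k h)) (comul 1))
  -- S(h₁)h₂S(h₃) = S(h)
  antipode_mid : ∀ h : H,
    (LinearMap.mul' k H)
      ((TensorProduct.map (LinearMap.mul' k H ∘ₗ TensorProduct.map antipode LinearMap.id)
        antipode) ((TensorProduct.map comul LinearMap.id) (comul h))) = antipode h

namespace WeakHopf

variable {k H : Type*} [Field k] [Ring H] [Algebra k H] (W : WeakHopf k H)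

/-- The target counital map ε_t(h) = ε(1₁h)1₂, as a linear map. -/
noncomputable def εtL : H →ₗ[k] H :=
  (TensorProduct.lid k H).toLinearMap
    ∘ₗ TensorProduct.map
        (W.counit ∘ₗ LinearMap.mul' k H ∘ₗ (TensorProduct.comm k H H).toLinearMap)
        LinearMap.id
    ∘ₗ (TensorProduct.assoc k H H H).symm.toLinearMap
    ∘ₗ (TensorProduct.mk k H (H ⊗[k] H)).flip (W.comul 1)

/-- The source counital map ε_s(h) = 1₁ε(h1₂), as a linear map. -/
noncomputable def εsL : H →ₗ[k] H :=
  (TensorProduct.rid k H).toLinearMap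
    ∘ₗ TensorProduct.map LinearMap.id
        (W.counit ∘ₗ LinearMap.mul' k H ∘ₗ (TensorProduct.comm k H H).toLinearMap)
    ∘ₗ (TensorProduct.assoc k H H H).toLinearMap
    ∘ₗ (TensorProduct.mk k (H ⊗[k] H) H) (W.comul 1)

/-- The minimal weak Hopf subalgebra H_min = H_t H_s (as a subspace). -/
noncomputable def Hmin : Submodule k H :=
  Submodule.span k
    {x : H | ∃ z ∈ Set.range ⇑W.εtL, ∃ y ∈ Set.range ⇑W.εsL, x = z * y}

/-- g ∈ H is group-like: invertible and Δ(g) = (g⊗g)Δ(1) = Δ(1)(g⊗g). -/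
def IsGroupLike (g : H) : Prop :=
  IsUnit g ∧ W.comul g = (g ⊗ₜ[k] g) * W.comul 1 ∧
    W.comul g = W.comul 1 * (g ⊗ₜ[k] g)

/-- The convolution product on H* = (H →ₗ[k] k): ⟨φψ, h⟩ = ⟨φ, h₁⟩⟨ψ, h₂⟩. -/
noncomputable def dualMul (φ ψ : H →ₗ[k] k) : H →ₗ[k] k :=
  (TensorProduct.lid k k).toLinearMap ∘ₗ TensorProduct.map φ ψ ∘ₗ W.comul

/-- γ ∈ H* is group-like: invertible in H* and
⟨γ,hg⟩ = ⟨γ,h1₁⟩⟨γ,S(1₂)g⟩ = ⟨γ,hS(1₁)⟩⟨γ,1₂g⟩ for all h,g. -/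
noncomputable def IsGroupLikeDual (γ : H →ₗ[k] k) : Prop :=
  (∃ β : H →ₗ[k] k, W.dualMul γ β = W.counit ∧ W.dualMul β γ = W.counit) ∧
  (∀ h g : H, γ (h * g) =
    (TensorProduct.lid k k)
      ((TensorProduct.map (γ ∘ₗ LinearMap.mulLeft k h)
        (γ ∘ₗ LinearMap.mulRight k g ∘ₗ W.antipode)) (W.comul 1))) ∧
  (∀ h g : H, γ (h * g) =
    (TensorProduct.lid k k)
      ((TensorProduct.map (γ ∘ₗ LinearMap.mulLeft k h ∘ₗ W.antipode)
        (γ ∘ₗ LinearMap.mulRight k g)) (W.comul 1)))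

/-- x is a left integral in H: hx = ε_t(h)x for all h. -/
def IsLeftIntegral (x : H) : Prop := ∀ h : H, h * x = W.εtL h * x

/-- The space of left integrals in H. -/
noncomputable def leftIntegrals : Submodule k H where
  carrier := {x : H | ∀ h : H, h * x = W.εtL h * x}
  add_mem' := fun ha hb h => by rw [mul_add, ha h, hb h, mul_add]
  zero_mem' := fun h => by rw [mul_zero, mul_zero]
  smul_mem' := fun c x hx h => by rw [mul_smul_comm, hx h, mul_smul_comm]

/-- λ ∈ H* is a left integral in H*: equivalently h₁λ(h₂) = ε_s(h₁)λ(h₂). -/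
noncomputable def IsLeftIntegralDual (lam : H →ₗ[k] k) : Prop :=
  ∀ h : H,
    (TensorProduct.rid k H) ((TensorProduct.map LinearMap.id lam) (W.comul h)) =
      (TensorProduct.rid k H) ((TensorProduct.map W.εsL lam) (W.comul h))

/-- The action y·h := ⟨γ, yh1₁⟩S(1₂) of H on H_s associated to γ ∈ H*. -/
noncomputable def act (γ : H →ₗ[k] k) (y h : H) : H :=
  (TensorProduct.lid k H)
    ((TensorProduct.map (γ ∘ₗ LinearMap.mulLeft k (y * h)) W.antipode) (W.comul 1))

/-- ε_t^g(ψ) ∈ H*, given by ⟨ε_t^g(ψ), x⟩ = ε(S(x)g₁)ψ(g₂). -/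
noncomputable def etg (g : H) (ψ : H →ₗ[k] k) : H →ₗ[k] k :=
  (TensorProduct.lid k k).toLinearMap
    ∘ₗ TensorProduct.map (W.counit ∘ₗ LinearMap.mul' k H) ψ
    ∘ₗ (TensorProduct.assoc k H H H).symm.toLinearMap
    ∘ₗ (TensorProduct.mk k H (H ⊗[k] H)).flip (W.comul g)
    ∘ₗ W.antipode

/-- L_g = {φ ∈ H* : ψφ = ε_t^g(ψ)φ for all ψ}. -/
noncomputable def Lset (g : H) : Set (H →ₗ[k] k) :=
  {φ | ∀ ψ : H →ₗ[k] k, W.dualMul ψ φ = W.dualMul (W.etg g ψ) φ}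

end WeakHopf

section AuxWH

open TensorProduct LinearMap

variable {k H : Type*} [Field k] [Ring H] [Algebra k H]

namespace WeakHopf

variable (W : WeakHopf k H)

/-- Δ(1). -/
noncomputable def e : H ⊗[k] H := W.comul 1

/-- Φ(a⊗b) = a·S(b). -/
noncomputable def ph : H ⊗[k] H →ₗ[k] H :=
  LinearMap.mul' k H ∘ₗ TensorProduct.map LinearMap.id W.antipode

/-- q(a⊗b) = S(a)·b. -/
noncomputable def qq : H ⊗[k] H →ₗ[k] H :=
  LinearMap.mul' k H ∘ₗ TensorProduct.map W.antipode LinearMap.id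

/-- target counital map as a linear map -/
noncomputable def etm : H →ₗ[k] H := W.ph ∘ₗ W.comul

/-- source counital map as a linear map -/
noncomputable def esm : H →ₗ[k] H := W.qq ∘ₗ W.comul

@[simp] lemma ph_tmul (a b : H) : W.ph (a ⊗ₜ[k] b) = a * W.antipode b := rfl
@[simp] lemma qq_tmul (a b : H) : W.qq (a ⊗ₜ[k] b) = W.antipode a * b := rfl

lemma e_mul_e : W.e * W.e = W.e := by
  rw [e, ← W.comul_mul, one_mul]

lemma absorb_l (h : H) : W.e * W.comul h = W.comul h := by
  rw [e, ← W.comul_mul, one_mul]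

lemma absorb_r (h : H) : W.comul h * W.e = W.comul h := by
  rw [e, ← W.comul_mul, mul_one]

/-- multiplicativity of `map Δ id`. -/
lemma mapc_mul (u v : H ⊗[k] H) :
    TensorProduct.map W.comul LinearMap.id (u * v) =
      TensorProduct.map W.comul LinearMap.id u * TensorProduct.map W.comul LinearMap.id v := by
  induction u using TensorProduct.induction_on with
  | zero => simp [zero_mul]
  | tmul a b =>
    induction v using TensorProduct.induction_on with
    | zero => simp [mul_zero]
    | tmul c d =>
      simp [Algebra.TensorProduct.tmul_mul_tmul, W.comul_mul]
    | add x y hx hy => rw [mul_add, map_add, hx, hy, map_add, mul_add]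
  | add x y hx hy => rw [add_mul, map_add, hx, hy, map_add, add_mul]

lemma mapic_mul (u v : H ⊗[k] H) :
    TensorProduct.map LinearMap.id W.comul (u * v) =
      TensorProduct.map LinearMap.id W.comul u * TensorProduct.map LinearMap.id W.comul v := by
  induction u using TensorProduct.induction_on with
  | zero => simp [zero_mul]
  | tmul a b =>
    induction v using TensorProduct.induction_on with
    | zero => simp [mul_zero]
    | tmul c d =>
      simp [Algebra.TensorProduct.tmul_mul_tmul, W.comul_mul]
    | add x y hx hy => rw [mul_add, map_add, hx, hy, map_add, mul_add]
  | add x y hx hy => rw [add_mul, map_add, hx, hy, map_add, add_mul]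

lemma assoc_mul (u v : (H ⊗[k] H) ⊗[k] H) :
    TensorProduct.assoc k H H H (u * v) =
      TensorProduct.assoc k H H H u * TensorProduct.assoc k H H H v :=
  map_mul (Algebra.TensorProduct.assoc k k k H H H) u v

lemma assoc_symm_mul (u v : H ⊗[k] (H ⊗[k] H)) :
    (TensorProduct.assoc k H H H).symm (u * v) =
      (TensorProduct.assoc k H H H).symm u * (TensorProduct.assoc k H H H).symm v :=
  map_mul (Algebra.TensorProduct.assoc k k k H H H).symm u v

end WeakHopf

end AuxWH

section AuxWH2

open TensorProduct LinearMap

variable {k H : Type*} [Field k] [Ring H] [Algebra k H]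

namespace WeakHopf

lemma assoc_mul' (u v : (H ⊗[k] H) ⊗[k] H) :
    TensorProduct.assoc k H H H (u * v) =
      TensorProduct.assoc k H H H u * TensorProduct.assoc k H H H v :=
  map_mul (Algebra.TensorProduct.assoc k k k H H H) u v

lemma assoc_symm_mul' (u v : H ⊗[k] (H ⊗[k] H)) :
    (TensorProduct.assoc k H H H).symm (u * v) =
      (TensorProduct.assoc k H H H).symm u * (TensorProduct.assoc k H H H).symm v :=
  map_mul (Algebra.TensorProduct.assoc k k k H H H).symm u v

variable (W : WeakHopf k H)

/-- `εsL h = Σ 1₁ ε(h·1₂)`. -/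
lemma esL_apply (h : H) :
    W.εsL h = (TensorProduct.rid k H)
      ((TensorProduct.map LinearMap.id (W.counit ∘ₗ LinearMap.mulLeft k h)) W.e) := by
  show (TensorProduct.rid k H)
      ((TensorProduct.map LinearMap.id (W.counit ∘ₗ LinearMap.mul' k H ∘ₗ
        (TensorProduct.comm k H H).toLinearMap))
        ((TensorProduct.assoc k H H H) (W.e ⊗ₜ[k] h))) = _
  induction W.e using TensorProduct.induction_on with
  | zero =>
    simp only [zero_tmul, LinearEquiv.map_zero, LinearMap.map_zero]
  | tmul a b => simp
  | add x y hx hy =>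
    rw [add_tmul, LinearEquiv.map_add, LinearMap.map_add, LinearEquiv.map_add,
      LinearMap.map_add, LinearEquiv.map_add, hx, hy]

/-- `εtL h = Σ ε(1₁·h) 1₂`. -/
lemma etL_apply (h : H) :
    W.εtL h = (TensorProduct.lid k H)
      ((TensorProduct.map (W.counit ∘ₗ LinearMap.mulRight k h) LinearMap.id) W.e) := by
  show (TensorProduct.lid k H)
      ((TensorProduct.map (W.counit ∘ₗ LinearMap.mul' k H ∘ₗ
        (TensorProduct.comm k H H).toLinearMap) LinearMap.id)
        ((TensorProduct.assoc k H H H).symm (h ⊗ₜ[k] W.e))) = _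
  induction W.e using TensorProduct.induction_on with
  | zero =>
    simp only [tmul_zero, LinearEquiv.map_zero, LinearMap.map_zero]
  | tmul a b => simp
  | add x y hx hy =>
    rw [tmul_add, LinearEquiv.map_add, LinearMap.map_add, LinearEquiv.map_add,
      LinearMap.map_add, LinearEquiv.map_add, hx, hy]

lemma esm_eq_esL (h : H) : W.esm h = W.εsL h := by
  rw [esL_apply]
  exact W.antipode_left h

lemma etm_apply (h : H) :
    W.etm h = (TensorProduct.lid k H)
      ((TensorProduct.map (W.counit ∘ₗ LinearMap.mulRight k h) LinearMap.id) W.e) :=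
  W.antipode_right h

lemma ph_e : W.ph W.e = 1 := by
  have h := W.antipode_right 1
  have h1 : W.counit ∘ₗ LinearMap.mulRight k (1 : H) = W.counit := by
    ext x; simp
  rw [h1] at h
  exact h.trans (W.counit_comul 1)

lemma qq_e : W.qq W.e = 1 := by
  have h := W.antipode_left 1
  have h1 : W.counit ∘ₗ LinearMap.mulLeft k (1 : H) = W.counit := by
    ext x; simp
  rw [h1] at h
  exact h.trans (W.comul_counit 1)

lemma ph_factor (a : H) (u : H ⊗[k] H) :
    W.ph ((a ⊗ₜ[k] (1 : H)) * u) = a * W.ph u := by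
  induction u using TensorProduct.induction_on with
  | zero => simp
  | tmul c d => simp [Algebra.TensorProduct.tmul_mul_tmul, mul_assoc]
  | add x y hx hy => rw [mul_add, map_add, hx, hy, map_add, mul_add]

lemma qq_factor (u : H ⊗[k] H) (b : H) :
    W.qq (u * ((1 : H) ⊗ₜ[k] b)) = W.qq u * b := by
  induction u using TensorProduct.induction_on with
  | zero => simp
  | tmul c d => simp [Algebra.TensorProduct.tmul_mul_tmul, mul_assoc]
  | add x y hx hy => rw [add_mul, map_add, hx, hy, map_add, add_mul]

/-- weak unit, left form -/
lemma wul : TensorProduct.map W.comul LinearMap.id W.e =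
    (W.e ⊗ₜ[k] (1 : H)) * ((TensorProduct.assoc k H H H).symm ((1 : H) ⊗ₜ[k] W.e)) :=
  W.weak_unit_left

lemma wur : TensorProduct.map W.comul LinearMap.id W.e =
    ((TensorProduct.assoc k H H H).symm ((1 : H) ⊗ₜ[k] W.e)) * (W.e ⊗ₜ[k] (1 : H)) :=
  W.weak_unit_right

lemma coassoc_e : TensorProduct.assoc k H H H (TensorProduct.map W.comul LinearMap.id W.e) =
    TensorProduct.map LinearMap.id W.comul W.e :=
  W.coassoc 1

lemma idc_e_l : TensorProduct.map LinearMap.id W.comul W.e =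
    TensorProduct.assoc k H H H (W.e ⊗ₜ[k] (1 : H)) * ((1 : H) ⊗ₜ[k] W.e) := by
  rw [← coassoc_e, wul, assoc_mul']
  congr 1
  exact (TensorProduct.assoc k H H H).apply_symm_apply _

lemma idc_e_r : TensorProduct.map LinearMap.id W.comul W.e =
    ((1 : H) ⊗ₜ[k] W.e) * TensorProduct.assoc k H H H (W.e ⊗ₜ[k] (1 : H)) := by
  rw [← coassoc_e, wur, assoc_mul']
  congr 1
  exact (TensorProduct.assoc k H H H).apply_symm_apply _

end WeakHopf

end AuxWH2

section AuxWH3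

open TensorProduct LinearMap

variable {k H : Type*} [Field k] [Ring H] [Algebra k H]

namespace WeakHopf

variable (W : WeakHopf k H)

/-- pushing Δ through the εs-formula -/
lemma comul_rid_aux (φ : H →ₗ[k] k) (u : H ⊗[k] H) :
    W.comul ((TensorProduct.rid k H) ((TensorProduct.map LinearMap.id φ) u)) =
      (TensorProduct.rid k (H ⊗[k] H))
        ((TensorProduct.map LinearMap.id φ) (TensorProduct.map W.comul LinearMap.id u)) := by
  induction u using TensorProduct.induction_on with
  | zero => simp only [LinearMap.map_zero, LinearEquiv.map_zero]
  | tmul a b => simp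
  | add x y hx hy => simp only [map_add, hx, hy]

lemma comul_lid_aux (φ : H →ₗ[k] k) (u : H ⊗[k] H) :
    W.comul ((TensorProduct.lid k H) ((TensorProduct.map φ LinearMap.id) u)) =
      (TensorProduct.lid k (H ⊗[k] H))
        ((TensorProduct.map φ LinearMap.id) (TensorProduct.map LinearMap.id W.comul u)) := by
  induction u using TensorProduct.induction_on with
  | zero => simp only [LinearMap.map_zero, LinearEquiv.map_zero]
  | tmul a b => simp
  | add x y hx hy => simp only [map_add, hx, hy]

/-- collapse of the (w ⊗ₜ 1) * assoc⁻¹(1 ⊗ₜ u) tensors against ε(h·–) on the last leg -/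
lemma Jh_left (h : H) (w : H ⊗[k] H) (u : H ⊗[k] H) :
    (TensorProduct.rid k (H ⊗[k] H))
      ((TensorProduct.map LinearMap.id (W.counit ∘ₗ LinearMap.mulLeft k h))
        ((w ⊗ₜ[k] (1 : H)) * (TensorProduct.assoc k H H H).symm ((1 : H) ⊗ₜ[k] u))) =
      w * ((1 : H) ⊗ₜ[k] (TensorProduct.rid k H)
        ((TensorProduct.map LinearMap.id (W.counit ∘ₗ LinearMap.mulLeft k h)) u)) := by
  induction u using TensorProduct.induction_on with
  | zero =>
    simp only [tmul_zero, LinearEquiv.map_zero, mul_zero, LinearMap.map_zero]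
  | tmul c d =>
    simp only [TensorProduct.assoc_symm_tmul, Algebra.TensorProduct.tmul_mul_tmul,
      one_mul, mul_one, TensorProduct.map_tmul, TensorProduct.rid_tmul,
      LinearMap.coe_comp, Function.comp_apply, LinearMap.id_coe, id_eq,
      LinearMap.mulLeft_apply]
    rw [TensorProduct.tmul_smul, mul_smul_comm]
  | add x y hx hy =>
    simp only [tmul_add, LinearEquiv.map_add, mul_add, LinearMap.map_add, hx, hy]

lemma Jh_right (h : H) (w : H ⊗[k] H) (u : H ⊗[k] H) :
    (TensorProduct.rid k (H ⊗[k] H))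
      ((TensorProduct.map LinearMap.id (W.counit ∘ₗ LinearMap.mulLeft k h))
        ((TensorProduct.assoc k H H H).symm ((1 : H) ⊗ₜ[k] u) * (w ⊗ₜ[k] (1 : H)))) =
      ((1 : H) ⊗ₜ[k] (TensorProduct.rid k H)
        ((TensorProduct.map LinearMap.id (W.counit ∘ₗ LinearMap.mulLeft k h)) u)) * w := by
  induction u using TensorProduct.induction_on with
  | zero =>
    simp only [tmul_zero, LinearEquiv.map_zero, zero_mul, LinearMap.map_zero]
  | tmul c d =>
    simp only [TensorProduct.assoc_symm_tmul, Algebra.TensorProduct.tmul_mul_tmul,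
      one_mul, mul_one, TensorProduct.map_tmul, TensorProduct.rid_tmul,
      LinearMap.coe_comp, Function.comp_apply, LinearMap.id_coe, id_eq,
      LinearMap.mulLeft_apply]
    rw [TensorProduct.tmul_smul, smul_mul_assoc]
  | add x y hx hy =>
    simp only [tmul_add, LinearEquiv.map_add, add_mul, LinearMap.map_add, hx, hy]

/-- Δ(εsL h) = Δ(1) · (1 ⊗ εsL h) -/
lemma comul_esL_l (h : H) :
    W.comul (W.εsL h) = W.e * ((1 : H) ⊗ₜ[k] W.εsL h) := by
  rw [esL_apply, comul_rid_aux, show TensorProduct.map W.comul LinearMap.id W.e =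
    (W.e ⊗ₜ[k] (1 : H)) * ((TensorProduct.assoc k H H H).symm ((1 : H) ⊗ₜ[k] W.e)) from W.wul,
    Jh_left, ← esL_apply]

/-- Δ(εsL h) = (1 ⊗ εsL h) · Δ(1) -/
lemma comul_esL_r (h : H) :
    W.comul (W.εsL h) = ((1 : H) ⊗ₜ[k] W.εsL h) * W.e := by
  rw [esL_apply, comul_rid_aux, show TensorProduct.map W.comul LinearMap.id W.e =
    ((TensorProduct.assoc k H H H).symm ((1 : H) ⊗ₜ[k] W.e)) * (W.e ⊗ₜ[k] (1 : H)) from W.wur,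
    Jh_right, ← esL_apply]

/-- collapse against ε(–·h) on the first leg -/
lemma Kh_left (h : H) (w : H ⊗[k] H) (u : H ⊗[k] H) :
    (TensorProduct.lid k (H ⊗[k] H))
      ((TensorProduct.map (W.counit ∘ₗ LinearMap.mulRight k h) LinearMap.id)
        (TensorProduct.assoc k H H H (u ⊗ₜ[k] (1 : H)) * ((1 : H) ⊗ₜ[k] w))) =
      ((TensorProduct.lid k H)
        ((TensorProduct.map (W.counit ∘ₗ LinearMap.mulRight k h) LinearMap.id) u)
          ⊗ₜ[k] (1 : H)) * w := by
  induction u using TensorProduct.induction_on with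
  | zero =>
    simp only [zero_tmul, LinearEquiv.map_zero, zero_mul, LinearMap.map_zero]
  | tmul c d =>
    simp only [TensorProduct.assoc_tmul, Algebra.TensorProduct.tmul_mul_tmul,
      one_mul, mul_one, TensorProduct.map_tmul, TensorProduct.lid_tmul,
      LinearMap.coe_comp, Function.comp_apply, LinearMap.id_coe, id_eq,
      LinearMap.mulRight_apply]
    rw [← TensorProduct.smul_tmul', smul_mul_assoc]
  | add x y hx hy =>
    simp only [add_tmul, LinearEquiv.map_add, add_mul, LinearMap.map_add, hx, hy]

lemma Kh_right (h : H) (w : H ⊗[k] H) (u : H ⊗[k] H) :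
    (TensorProduct.lid k (H ⊗[k] H))
      ((TensorProduct.map (W.counit ∘ₗ LinearMap.mulRight k h) LinearMap.id)
        (((1 : H) ⊗ₜ[k] w) * TensorProduct.assoc k H H H (u ⊗ₜ[k] (1 : H)))) =
      w * (((TensorProduct.lid k H)
        ((TensorProduct.map (W.counit ∘ₗ LinearMap.mulRight k h) LinearMap.id) u))
          ⊗ₜ[k] (1 : H)) := by
  induction u using TensorProduct.induction_on with
  | zero =>
    simp only [zero_tmul, LinearEquiv.map_zero, mul_zero, LinearMap.map_zero]
  | tmul c d =>
    simp only [TensorProduct.assoc_tmul, Algebra.TensorProduct.tmul_mul_tmul,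
      one_mul, mul_one, TensorProduct.map_tmul, TensorProduct.lid_tmul,
      LinearMap.coe_comp, Function.comp_apply, LinearMap.id_coe, id_eq,
      LinearMap.mulRight_apply]
    rw [← TensorProduct.smul_tmul', mul_smul_comm]
  | add x y hx hy =>
    simp only [add_tmul, LinearEquiv.map_add, mul_add, LinearMap.map_add, hx, hy]

/-- Δ(etm h) = (etm h ⊗ 1) · Δ(1) -/
lemma comul_etm_l (h : H) :
    W.comul (W.etm h) = (W.etm h ⊗ₜ[k] (1 : H)) * W.e := by
  rw [etm_apply, comul_lid_aux, idc_e_l, Kh_left, ← etm_apply]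

/-- Δ(etm h) = Δ(1) · (etm h ⊗ 1) -/
lemma comul_etm_r (h : H) :
    W.comul (W.etm h) = W.e * (W.etm h ⊗ₜ[k] (1 : H)) := by
  rw [etm_apply, comul_lid_aux, idc_e_r, Kh_right, ← etm_apply]

end WeakHopf

end AuxWH3

section AuxWH4

open TensorProduct LinearMap

variable {k H : Type*} [Field k] [Ring H] [Algebra k H]

namespace WeakHopf

variable (W : WeakHopf k H)

lemma asf (u : H ⊗[k] H) (a : H) :
    (TensorProduct.assoc k H H H).symm ((1 : H) ⊗ₜ[k] u) *
        ((1 : H ⊗[k] H) ⊗ₜ[k] a) =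
      (TensorProduct.assoc k H H H).symm ((1 : H) ⊗ₜ[k] (u * ((1 : H) ⊗ₜ[k] a))) := by
  induction u using TensorProduct.induction_on with
  | zero =>
    simp only [tmul_zero, LinearEquiv.map_zero, zero_mul]
  | tmul c d =>
    simp only [TensorProduct.assoc_symm_tmul, Algebra.TensorProduct.tmul_mul_tmul,
      one_mul, mul_one]
  | add x y hx hy =>
    simp only [tmul_add, LinearEquiv.map_add, add_mul, hx, hy]

lemma absorb3 : TensorProduct.map W.comul LinearMap.id W.e * (W.e ⊗ₜ[k] (1 : H)) =
    TensorProduct.map W.comul LinearMap.id W.e := by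
  rw [wur, mul_assoc, Algebra.TensorProduct.tmul_mul_tmul, W.e_mul_e, one_mul]

/-- (Δ⊗id)Δ(εsL h) = (Δ1 ⊗ 1) · assoc⁻¹(1 ⊗ Δ(εsL h)) -/
lemma trip_s (h : H) :
    TensorProduct.map W.comul LinearMap.id (W.comul (W.εsL h)) =
      (W.e ⊗ₜ[k] (1 : H)) *
        (TensorProduct.assoc k H H H).symm ((1 : H) ⊗ₜ[k] W.comul (W.εsL h)) := by
  conv_lhs => rw [comul_esL_l, mapc_mul]
  have h1 : TensorProduct.map W.comul LinearMap.id ((1 : H) ⊗ₜ[k] W.εsL h) =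
      W.e ⊗ₜ[k] W.εsL h := by simp [e]
  rw [h1, show (W.e ⊗ₜ[k] W.εsL h) =
    (W.e ⊗ₜ[k] (1 : H)) * ((1 : H ⊗[k] H) ⊗ₜ[k] W.εsL h) by
      rw [Algebra.TensorProduct.tmul_mul_tmul, mul_one, one_mul],
    ← mul_assoc, absorb3, wul, mul_assoc, asf, ← comul_esL_l]

/-- (Δ⊗id)Δ(etm h) = (Δ(etm h) ⊗ 1) · assoc⁻¹(1 ⊗ Δ1) -/
lemma trip_t (h : H) :
    TensorProduct.map W.comul LinearMap.id (W.comul (W.etm h)) =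
      (W.comul (W.etm h) ⊗ₜ[k] (1 : H)) *
        (TensorProduct.assoc k H H H).symm ((1 : H) ⊗ₜ[k] W.e) := by
  conv_lhs => rw [comul_etm_l, mapc_mul]
  have h1 : TensorProduct.map W.comul LinearMap.id (W.etm h ⊗ₜ[k] (1 : H)) =
      W.comul (W.etm h) ⊗ₜ[k] (1 : H) := by simp
  rw [h1, wul, ← mul_assoc, Algebra.TensorProduct.tmul_mul_tmul, W.absorb_r, mul_one]

/-- evaluation of the antipode_mid expression on such triples -/
lemma gtrick (u w : H ⊗[k] H) :
    (LinearMap.mul' k H)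
      ((TensorProduct.map (LinearMap.mul' k H ∘ₗ TensorProduct.map W.antipode LinearMap.id)
        W.antipode)
        ((u ⊗ₜ[k] (1 : H)) * (TensorProduct.assoc k H H H).symm ((1 : H) ⊗ₜ[k] w))) =
      W.qq u * W.ph w := by
  induction w using TensorProduct.induction_on with
  | zero =>
    simp only [tmul_zero, LinearEquiv.map_zero, mul_zero, LinearMap.map_zero]
  | tmul c d =>
    simp only [TensorProduct.assoc_symm_tmul, Algebra.TensorProduct.tmul_mul_tmul,
      one_mul, mul_one, TensorProduct.map_tmul, LinearMap.mul'_apply, ph_tmul]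
    rw [show (LinearMap.mul' k H ∘ₗ TensorProduct.map W.antipode LinearMap.id)
        (u * (1 : H) ⊗ₜ[k] c) = W.qq (u * ((1 : H) ⊗ₜ[k] c)) from rfl,
      W.qq_factor, mul_assoc]
  | add x y hx hy =>
    simp only [tmul_add, LinearEquiv.map_add, mul_add, LinearMap.map_add, hx, hy]

/-- S ∘ εs = εt ∘ εs -/
lemma S_esL (h : H) : W.antipode (W.εsL h) = W.etm (W.εsL h) := by
  have mid := W.antipode_mid (W.εsL h)
  rw [trip_s, gtrick, qq_e, one_mul] at mid
  rw [← mid]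
  rfl

/-- S ∘ εt = εs ∘ εt -/
lemma S_etm (h : H) : W.antipode (W.etm h) = W.esm (W.etm h) := by
  have mid := W.antipode_mid (W.etm h)
  rw [trip_t, gtrick, ph_e, mul_one] at mid
  rw [← mid]
  rfl

end WeakHopf

end AuxWH4

section AuxWH5

open TensorProduct LinearMap

variable {k H : Type*} [Field k] [Ring H] [Algebra k H]

namespace WeakHopf

variable (W : WeakHopf k H)

/-- ε on the right leg -/
noncomputable def eR : H ⊗[k] H →ₗ[k] H :=
  (TensorProduct.rid k H).toLinearMap ∘ₗ TensorProduct.map LinearMap.id W.counit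

/-- ε on the left leg -/
noncomputable def eL : H ⊗[k] H →ₗ[k] H :=
  (TensorProduct.lid k H).toLinearMap ∘ₗ TensorProduct.map W.counit LinearMap.id

@[simp] lemma eR_tmul (a b : H) : W.eR (a ⊗ₜ[k] b) = W.counit b • a := by
  simp [eR]

@[simp] lemma eL_tmul (a b : H) : W.eL (a ⊗ₜ[k] b) = W.counit a • b := by
  simp [eL]

lemma eR_comul (h : H) : W.eR (W.comul h) = h := W.comul_counit h

lemma eL_comul (h : H) : W.eL (W.comul h) = h := W.counit_comul h

lemma etm_eL (x : H) : W.etm x = W.eL (W.e * (x ⊗ₜ[k] (1 : H))) := by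
  rw [etm_apply]
  induction W.e using TensorProduct.induction_on with
  | zero => simp only [LinearMap.map_zero, LinearEquiv.map_zero, zero_mul]
  | tmul p r =>
    simp [Algebra.TensorProduct.tmul_mul_tmul]
  | add u v hu hv =>
    simp only [LinearMap.map_add, LinearEquiv.map_add, add_mul, hu, hv]

lemma esm_eR (x : H) : W.esm x = W.eR (((1 : H) ⊗ₜ[k] x) * W.e) := by
  rw [esm_eq_esL, esL_apply]
  induction W.e using TensorProduct.induction_on with
  | zero => simp only [LinearMap.map_zero, LinearEquiv.map_zero, mul_zero]
  | tmul p r =>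
    simp [Algebra.TensorProduct.tmul_mul_tmul]
  | add u v hu hv =>
    simp only [LinearMap.map_add, LinearEquiv.map_add, mul_add, hu, hv]

lemma sub1 (u : H ⊗[k] H) (b : H) :
    TensorProduct.map LinearMap.id W.eL
        (TensorProduct.assoc k H H H (u ⊗ₜ[k] b)) = W.eR u ⊗ₜ[k] b := by
  induction u using TensorProduct.induction_on with
  | zero => simp only [zero_tmul, LinearEquiv.map_zero, LinearMap.map_zero]
  | tmul c d =>
    simp only [TensorProduct.assoc_tmul, TensorProduct.map_tmul, LinearMap.id_coe,
      id_eq, eL_tmul, eR_tmul]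
    rw [TensorProduct.tmul_smul, TensorProduct.smul_tmul']
  | add x y hx hy =>
    simp only [add_tmul, LinearEquiv.map_add, LinearMap.map_add, hx, hy]

lemma cl1 (Z : H ⊗[k] H) :
    TensorProduct.map LinearMap.id W.eL
      (TensorProduct.assoc k H H H (TensorProduct.map W.comul LinearMap.id Z)) = Z := by
  induction Z using TensorProduct.induction_on with
  | zero => simp only [LinearMap.map_zero, LinearEquiv.map_zero]
  | tmul a b =>
    simp only [TensorProduct.map_tmul, LinearMap.id_coe, id_eq]
    rw [sub1, eR_comul]
  | add x y hx hy =>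
    simp only [LinearMap.map_add, LinearEquiv.map_add, hx, hy]

lemma sub2 (a : H) (u : H ⊗[k] H) :
    TensorProduct.map W.eR LinearMap.id
        ((TensorProduct.assoc k H H H).symm (a ⊗ₜ[k] u)) = a ⊗ₜ[k] W.eL u := by
  induction u using TensorProduct.induction_on with
  | zero => simp only [tmul_zero, LinearEquiv.map_zero, LinearMap.map_zero]
  | tmul c d =>
    simp only [TensorProduct.assoc_symm_tmul, TensorProduct.map_tmul, LinearMap.id_coe,
      id_eq, eL_tmul, eR_tmul]
    rw [TensorProduct.tmul_smul, TensorProduct.smul_tmul']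
  | add x y hx hy =>
    simp only [tmul_add, LinearEquiv.map_add, LinearMap.map_add, hx, hy]

lemma cl2 (Z : H ⊗[k] H) :
    TensorProduct.map W.eR LinearMap.id
      ((TensorProduct.assoc k H H H).symm (TensorProduct.map LinearMap.id W.comul Z)) = Z := by
  induction Z using TensorProduct.induction_on with
  | zero => simp only [LinearMap.map_zero, LinearEquiv.map_zero]
  | tmul a b =>
    simp only [TensorProduct.map_tmul, LinearMap.id_coe, id_eq]
    rw [sub2, eL_comul]
  | add x y hx hy =>
    simp only [LinearMap.map_add, LinearEquiv.map_add, hx, hy]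

lemma m1 (u : H ⊗[k] H) :
    TensorProduct.map LinearMap.id W.etm u =
      TensorProduct.map LinearMap.id W.eL
        (((1 : H) ⊗ₜ[k] W.e) *
          TensorProduct.assoc k H H H (u ⊗ₜ[k] (1 : H))) := by
  induction u using TensorProduct.induction_on with
  | zero => simp only [LinearMap.map_zero, zero_tmul, LinearEquiv.map_zero, mul_zero]
  | tmul a b =>
    simp only [TensorProduct.assoc_tmul, TensorProduct.map_tmul, LinearMap.id_coe, id_eq,
      Algebra.TensorProduct.tmul_mul_tmul, one_mul]
    rw [etm_eL]
  | add x y hx hy =>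
    simp only [LinearMap.map_add, add_tmul, LinearEquiv.map_add, mul_add, hx, hy]

/-- G1 : Σ h₁ ⊗ εt(h₂) = Δ1 · (h ⊗ 1) -/
lemma G1 (h : H) :
    TensorProduct.map LinearMap.id W.etm (W.comul h) = W.e * (h ⊗ₜ[k] (1 : H)) := by
  rw [m1]
  have e1 : ((1 : H) ⊗ₜ[k] W.e) * TensorProduct.assoc k H H H (W.comul h ⊗ₜ[k] (1 : H)) =
      TensorProduct.assoc k H H H
        (TensorProduct.map W.comul LinearMap.id (W.e * (h ⊗ₜ[k] (1 : H)))) := by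
    rw [mapc_mul, assoc_mul']
    have e2 : TensorProduct.map W.comul LinearMap.id (h ⊗ₜ[k] (1 : H)) =
        W.comul h ⊗ₜ[k] (1 : H) := by simp
    rw [e2, wur, assoc_mul', LinearEquiv.apply_symm_apply, mul_assoc]
    congr 1
    rw [← assoc_mul', Algebra.TensorProduct.tmul_mul_tmul, W.absorb_l, one_mul]
  rw [e1, cl1]

lemma m2 (u : H ⊗[k] H) :
    TensorProduct.map W.esm LinearMap.id u =
      TensorProduct.map W.eR LinearMap.id
        ((TensorProduct.assoc k H H H).symm ((1 : H) ⊗ₜ[k] u) * (W.e ⊗ₜ[k] (1 : H))) := by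
  induction u using TensorProduct.induction_on with
  | zero => simp only [LinearMap.map_zero, tmul_zero, LinearEquiv.map_zero, zero_mul]
  | tmul a b =>
    simp only [TensorProduct.assoc_symm_tmul, TensorProduct.map_tmul, LinearMap.id_coe, id_eq,
      Algebra.TensorProduct.tmul_mul_tmul, mul_one]
    rw [esm_eR]
  | add x y hx hy =>
    simp only [LinearMap.map_add, tmul_add, LinearEquiv.map_add, add_mul, hx, hy]

/-- G2 : Σ εs(h₁) ⊗ h₂ = (1 ⊗ h) · Δ1 -/
lemma G2 (h : H) :
    TensorProduct.map W.esm LinearMap.id (W.comul h) = ((1 : H) ⊗ₜ[k] h) * W.e := by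
  rw [m2]
  have e1 : (TensorProduct.assoc k H H H).symm ((1 : H) ⊗ₜ[k] W.comul h) *
        (W.e ⊗ₜ[k] (1 : H)) =
      (TensorProduct.assoc k H H H).symm
        (TensorProduct.map LinearMap.id W.comul (((1 : H) ⊗ₜ[k] h) * W.e)) := by
    rw [mapic_mul, assoc_symm_mul']
    have e2 : TensorProduct.map LinearMap.id W.comul ((1 : H) ⊗ₜ[k] h) =
        (1 : H) ⊗ₜ[k] W.comul h := by simp
    rw [e2, idc_e_r, assoc_symm_mul', LinearEquiv.symm_apply_apply, ← mul_assoc]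
    congr 1
    rw [← assoc_symm_mul', Algebra.TensorProduct.tmul_mul_tmul, W.absorb_r, one_mul]
  rw [e1, cl2]

end WeakHopf

end AuxWH5

section AuxWH6

open TensorProduct LinearMap

variable {k H : Type*} [Field k] [Ring H] [Algebra k H]

namespace WeakHopf

variable (W : WeakHopf k H)

lemma m3 (u : H ⊗[k] H) :
    TensorProduct.map LinearMap.id W.etm u =
      TensorProduct.map LinearMap.id W.ph (TensorProduct.map LinearMap.id W.comul u) := by
  induction u using TensorProduct.induction_on with
  | zero => simp only [LinearMap.map_zero]
  | tmul a b => rfl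
  | add x y hx hy => simp only [LinearMap.map_add, hx, hy]

lemma m4 (u : H ⊗[k] H) :
    TensorProduct.map W.esm LinearMap.id u =
      TensorProduct.map W.qq LinearMap.id (TensorProduct.map W.comul LinearMap.id u) := by
  induction u using TensorProduct.induction_on with
  | zero => simp only [LinearMap.map_zero]
  | tmul a b => rfl
  | add x y hx hy => simp only [LinearMap.map_add, hx, hy]

lemma phmap (w u : H ⊗[k] H) :
    TensorProduct.map LinearMap.id W.ph
        (TensorProduct.assoc k H H H (w ⊗ₜ[k] (1 : H)) * ((1 : H) ⊗ₜ[k] u)) =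
      w * ((1 : H) ⊗ₜ[k] W.ph u) := by
  induction w using TensorProduct.induction_on with
  | zero => simp only [zero_tmul, LinearEquiv.map_zero, zero_mul, LinearMap.map_zero]
  | tmul p r =>
    simp only [TensorProduct.assoc_tmul, Algebra.TensorProduct.tmul_mul_tmul,
      one_mul, mul_one, TensorProduct.map_tmul, LinearMap.id_coe, id_eq]
    rw [W.ph_factor]
  | add x y hx hy =>
    simp only [add_tmul, LinearEquiv.map_add, add_mul, LinearMap.map_add, hx, hy]

lemma qqmap (u w : H ⊗[k] H) :
    TensorProduct.map W.qq LinearMap.id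
        ((u ⊗ₜ[k] (1 : H)) * (TensorProduct.assoc k H H H).symm ((1 : H) ⊗ₜ[k] w)) =
      (W.qq u ⊗ₜ[k] (1 : H)) * w := by
  induction w using TensorProduct.induction_on with
  | zero => simp only [tmul_zero, LinearEquiv.map_zero, mul_zero, LinearMap.map_zero]
  | tmul c d =>
    simp only [TensorProduct.assoc_symm_tmul, Algebra.TensorProduct.tmul_mul_tmul,
      one_mul, mul_one, TensorProduct.map_tmul, LinearMap.id_coe, id_eq]
    rw [W.qq_factor]
  | add x y hx hy =>
    simp only [tmul_add, LinearEquiv.map_add, mul_add, LinearMap.map_add, hx, hy]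

/-- K2 : Δ1 · (y ⊗ 1) = Δ1 · (1 ⊗ S y) for y in the source subalgebra -/
lemma K2 (h : H) :
    W.e * (W.εsL h ⊗ₜ[k] (1 : H)) = W.e * ((1 : H) ⊗ₜ[k] W.antipode (W.εsL h)) := by
  have evA := W.G1 (W.εsL h)
  rw [m3, ← W.coassoc (W.εsL h), trip_s, assoc_mul', LinearEquiv.apply_symm_apply,
    phmap] at evA
  rw [← evA]
  congr 2
  rw [S_esL]
  rfl

/-- A2 : (1 ⊗ z) · Δ1 = (S z ⊗ 1) · Δ1 for z in the target subalgebra -/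
lemma A2 (h : H) :
    ((1 : H) ⊗ₜ[k] W.etm h) * W.e = (W.antipode (W.etm h) ⊗ₜ[k] (1 : H)) * W.e := by
  have evA := W.G2 (W.etm h)
  rw [m4, trip_t, qqmap] at evA
  rw [← evA]
  congr 2
  rw [S_etm]
  rfl

end WeakHopf

end AuxWH6

section AuxWH7

open TensorProduct LinearMap

variable {k H : Type*} [Field k] [Ring H] [Algebra k H]

namespace WeakHopf

variable (W : WeakHopf k H)

/-- ε(x · εt(g)) = ε(x·g) -/
lemma counit_etm (x g : H) : W.counit (x * W.etm g) = W.counit (x * g) := by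
  have wc := W.weak_counit_right x 1 g
  rw [mul_one] at wc
  have key : ∀ u : H ⊗[k] H,
      W.counit (x * (TensorProduct.lid k H)
        ((TensorProduct.map (W.counit ∘ₗ LinearMap.mulRight k g) LinearMap.id) u)) =
      (TensorProduct.lid k k)
        ((TensorProduct.map (W.counit ∘ₗ LinearMap.mulLeft k x)
          (W.counit ∘ₗ LinearMap.mulRight k g)) ((TensorProduct.comm k H H) u)) := by
    intro u
    induction u using TensorProduct.induction_on with
    | zero => simp only [LinearMap.map_zero, LinearEquiv.map_zero, mul_zero]
    | tmul p r =>
      simp only [TensorProduct.map_tmul, TensorProduct.lid_tmul, TensorProduct.comm_tmul,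
        LinearMap.coe_comp, Function.comp_apply, LinearMap.id_coe, id_eq,
        LinearMap.mulRight_apply, LinearMap.mulLeft_apply]
      rw [mul_smul_comm, map_smul]
      simp [smul_eq_mul, mul_comm]
    | add u v hu hv =>
      simp only [LinearMap.map_add, LinearEquiv.map_add, mul_add, hu, hv]
  rw [etm_apply, key]
  exact wc.symm

/-- εt(a · εt(b)) = εt(a·b) -/
lemma etm_mul_etm (a b : H) : W.etm (a * W.etm b) = W.etm (a * b) := by
  have h1 : W.counit ∘ₗ LinearMap.mulRight k (a * W.etm b) =
      W.counit ∘ₗ LinearMap.mulRight k (a * b) := by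
    ext c
    simp only [LinearMap.coe_comp, Function.comp_apply, LinearMap.mulRight_apply]
    rw [← mul_assoc, ← mul_assoc, counit_etm]
  conv_lhs => rw [etm_apply]
  rw [h1, ← etm_apply]

/-- εt(εt(w)·x) = εt(w)·εt(x) -/
lemma etm_left (w x : H) : W.etm (W.etm w * x) = W.etm w * W.etm x := by
  show W.ph (W.comul (W.etm w * x)) = _
  rw [W.comul_mul, comul_etm_l, mul_assoc, W.absorb_l, ph_factor]
  rfl

/-- pure-collapse lemmas for the commutation argument -/
lemma elb_r (b : H) (w : H ⊗[k] H) (c : H) :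
    (TensorProduct.lid k H)
      ((TensorProduct.map (W.counit ∘ₗ LinearMap.mulRight k b) LinearMap.id)
        (w * ((1 : H) ⊗ₜ[k] c))) =
      (TensorProduct.lid k H)
        ((TensorProduct.map (W.counit ∘ₗ LinearMap.mulRight k b) LinearMap.id) w) * c := by
  induction w using TensorProduct.induction_on with
  | zero => simp only [zero_mul, LinearMap.map_zero, LinearEquiv.map_zero, zero_mul]
  | tmul p r =>
    simp only [Algebra.TensorProduct.tmul_mul_tmul, mul_one, one_mul,
      TensorProduct.map_tmul, TensorProduct.lid_tmul, LinearMap.coe_comp,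
      Function.comp_apply, LinearMap.id_coe, id_eq, LinearMap.mulRight_apply]
    rw [smul_mul_assoc]
  | add u v hu hv =>
    simp only [add_mul, LinearMap.map_add, LinearEquiv.map_add, hu, hv]

lemma elb_l (b : H) (w : H ⊗[k] H) (c : H) :
    (TensorProduct.lid k H)
      ((TensorProduct.map (W.counit ∘ₗ LinearMap.mulRight k b) LinearMap.id)
        (((1 : H) ⊗ₜ[k] c) * w)) =
      c * (TensorProduct.lid k H)
        ((TensorProduct.map (W.counit ∘ₗ LinearMap.mulRight k b) LinearMap.id) w) := by
  induction w using TensorProduct.induction_on with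
  | zero => simp only [mul_zero, LinearMap.map_zero, LinearEquiv.map_zero]
  | tmul p r =>
    simp only [Algebra.TensorProduct.tmul_mul_tmul, mul_one, one_mul,
      TensorProduct.map_tmul, TensorProduct.lid_tmul, LinearMap.coe_comp,
      Function.comp_apply, LinearMap.id_coe, id_eq, LinearMap.mulRight_apply]
    rw [mul_smul_comm]
  | add u v hu hv =>
    simp only [mul_add, LinearMap.map_add, LinearEquiv.map_add, hu, hv]

lemma theta1 (a b : H) (w u : H ⊗[k] H) :
    (TensorProduct.rid k H)
      ((TensorProduct.map
        ((TensorProduct.lid k H).toLinearMap ∘ₗ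
          TensorProduct.map (W.counit ∘ₗ LinearMap.mulRight k b) LinearMap.id)
        (W.counit ∘ₗ LinearMap.mulLeft k a))
        ((w ⊗ₜ[k] (1 : H)) * (TensorProduct.assoc k H H H).symm ((1 : H) ⊗ₜ[k] u))) =
      (TensorProduct.lid k H)
          ((TensorProduct.map (W.counit ∘ₗ LinearMap.mulRight k b) LinearMap.id) w) *
        (TensorProduct.rid k H)
          ((TensorProduct.map LinearMap.id (W.counit ∘ₗ LinearMap.mulLeft k a)) u) := by
  induction u using TensorProduct.induction_on with
  | zero =>
    simp only [tmul_zero, LinearEquiv.map_zero, mul_zero, LinearMap.map_zero]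
  | tmul c d =>
    simp only [TensorProduct.assoc_symm_tmul, Algebra.TensorProduct.tmul_mul_tmul,
      one_mul, mul_one, TensorProduct.map_tmul, TensorProduct.rid_tmul,
      LinearMap.coe_comp, Function.comp_apply, LinearMap.id_coe, id_eq,
      LinearMap.mulLeft_apply, LinearEquiv.coe_coe]
    rw [elb_r, mul_smul_comm]
  | add x y hx hy =>
    simp only [tmul_add, LinearEquiv.map_add, mul_add, LinearMap.map_add, hx, hy]

lemma theta2 (a b : H) (w u : H ⊗[k] H) :
    (TensorProduct.rid k H)
      ((TensorProduct.map
        ((TensorProduct.lid k H).toLinearMap ∘ₗ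
          TensorProduct.map (W.counit ∘ₗ LinearMap.mulRight k b) LinearMap.id)
        (W.counit ∘ₗ LinearMap.mulLeft k a))
        ((TensorProduct.assoc k H H H).symm ((1 : H) ⊗ₜ[k] u) * (w ⊗ₜ[k] (1 : H)))) =
      (TensorProduct.rid k H)
          ((TensorProduct.map LinearMap.id (W.counit ∘ₗ LinearMap.mulLeft k a)) u) *
        (TensorProduct.lid k H)
          ((TensorProduct.map (W.counit ∘ₗ LinearMap.mulRight k b) LinearMap.id) w) := by
  induction u using TensorProduct.induction_on with
  | zero =>
    simp only [tmul_zero, LinearEquiv.map_zero, zero_mul, LinearMap.map_zero]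
  | tmul c d =>
    simp only [TensorProduct.assoc_symm_tmul, Algebra.TensorProduct.tmul_mul_tmul,
      one_mul, mul_one, TensorProduct.map_tmul, TensorProduct.rid_tmul,
      LinearMap.coe_comp, Function.comp_apply, LinearMap.id_coe, id_eq,
      LinearMap.mulLeft_apply, LinearEquiv.coe_coe]
    rw [elb_l, smul_mul_assoc]
  | add x y hx hy =>
    simp only [tmul_add, LinearEquiv.map_add, add_mul, LinearMap.map_add, hx, hy]

/-- H_t and H_s commute elementwise -/
lemma comm_ts (a b : H) : W.etm b * W.εsL a = W.εsL a * W.etm b := by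
  have h := congrArg
    ((TensorProduct.rid k H) ∘
      (TensorProduct.map
        ((TensorProduct.lid k H).toLinearMap ∘ₗ
          TensorProduct.map (W.counit ∘ₗ LinearMap.mulRight k b) LinearMap.id)
        (W.counit ∘ₗ LinearMap.mulLeft k a)))
    (W.wul.symm.trans W.wur)
  simp only [Function.comp_apply] at h
  rw [theta1, theta2, ← etm_apply, ← esL_apply] at h
  exact h

lemma esL_idem (h : H) : W.εsL (W.εsL h) = W.εsL h := by
  rw [← esm_eq_esL]
  show W.qq (W.comul (W.εsL h)) = _
  rw [comul_esL_l, qq_factor, qq_e, one_mul]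

lemma esL_mul (x h : H) : W.εsL (x * W.εsL h) = W.εsL x * W.εsL h := by
  conv_lhs => rw [← esm_eq_esL]
  show W.qq (W.comul (x * W.εsL h)) = _
  rw [W.comul_mul, comul_esL_l, ← mul_assoc, W.absorb_r, qq_factor, ← W.esm_eq_esL x]
  rfl

lemma S_one : W.antipode (1 : H) = 1 := by
  have h1 : W.εsL (1 : H) = 1 := by
    rw [← esm_eq_esL]
    show W.qq (W.comul 1) = 1
    exact W.qq_e
  have := W.S_esL 1
  rw [h1] at this
  rw [this]
  show W.ph (W.comul 1) = 1
  exact W.ph_e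

/-- anti-multiplicativity of S on the source subalgebra -/
lemma antimult {a b : H} (ha : W.εsL a = a) (hb : W.εsL b = b) :
    W.antipode (a * b) = W.antipode b * W.antipode a := by
  have hab : W.εsL (a * b) = a * b := by
    conv_lhs => rw [← hb, esL_mul, ha, hb]
  have hSa : W.antipode a = W.etm a := by
    have := W.S_esL a; rwa [ha] at this
  have hSb : W.antipode b = W.etm b := by
    have := W.S_esL b; rwa [hb] at this
  have hSab : W.antipode (a * b) = W.etm (a * b) := by
    have := W.S_esL (a * b); rwa [hab] at this
  rw [hSab, ← etm_mul_etm, hSa, hSb]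
  have hc : a * W.etm b = W.etm b * a := by
    conv_lhs => rw [← ha]
    conv_rhs => rw [← ha]
    exact (W.comm_ts a b).symm
  rw [hc, etm_left]

end WeakHopf

end AuxWH7


/-- For invertible y ∈ H_s with S²(y) = y, S(y)y⁻¹ is group-like. -/
theorem weakHopf_trivial_groupLike {k H : Type*} [Field k] [Ring H] [Algebra k H]
    (W : WeakHopf k H) (y y' : H) (hy : y ∈ Set.range ⇑W.εsL)
    (hyy' : y * y' = 1) (hy'y : y' * y = 1)
    (hS2 : W.antipode (W.antipode y) = y) :
    W.IsGroupLike (W.antipode y * y') := by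
  open TensorProduct in
  obtain ⟨h₀, hh₀⟩ := hy
  have hys : W.εsL y = y := by rw [← hh₀, W.esL_idem]
  -- comultiplication of y
  have hΔy_l : W.comul y = W.e * ((1 : H) ⊗ₜ[k] y) := by
    have := W.comul_esL_l y; rwa [hys] at this
  have hΔy_r : W.comul y = ((1 : H) ⊗ₜ[k] y) * W.e := by
    have := W.comul_esL_r y; rwa [hys] at this
  -- comultiplication of y'
  have h1 : W.comul y * ((1 : H) ⊗ₜ[k] y') = W.e := by
    rw [hΔy_l, mul_assoc, Algebra.TensorProduct.tmul_mul_tmul, one_mul, hyy',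
      ← Algebra.TensorProduct.one_def, mul_one]
  have h2 : ((1 : H) ⊗ₜ[k] y') * W.comul y = W.e := by
    rw [hΔy_r, ← mul_assoc, Algebra.TensorProduct.tmul_mul_tmul, one_mul, hy'y,
      ← Algebra.TensorProduct.one_def, one_mul]
  have hΔy'_l : W.comul y' = W.e * ((1 : H) ⊗ₜ[k] y') := by
    calc W.comul y' = W.comul y' * W.e := (W.absorb_r y').symm
    _ = W.comul y' * (W.comul y * ((1 : H) ⊗ₜ[k] y')) := by rw [h1]
    _ = (W.comul y' * W.comul y) * ((1 : H) ⊗ₜ[k] y') := by rw [mul_assoc]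
    _ = W.e * ((1 : H) ⊗ₜ[k] y') := by rw [← W.comul_mul, hy'y]; rfl
  have hΔy'_r : W.comul y' = ((1 : H) ⊗ₜ[k] y') * W.e := by
    calc W.comul y' = W.e * W.comul y' := (W.absorb_l y').symm
    _ = (((1 : H) ⊗ₜ[k] y') * W.comul y) * W.comul y' := by rw [h2]
    _ = ((1 : H) ⊗ₜ[k] y') * (W.comul y * W.comul y') := by rw [mul_assoc]
    _ = ((1 : H) ⊗ₜ[k] y') * W.e := by rw [← W.comul_mul, hyy']; rfl
  -- y' lies in the source subalgebra
  have hy's : W.εsL y' = y' := by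
    rw [← W.esm_eq_esL]
    show W.qq (W.comul y') = y'
    rw [hΔy'_l, W.qq_factor, W.qq_e, one_mul]
  -- antipode facts
  have hSy : W.antipode y = W.etm y := by
    have := W.S_esL y; rwa [hys] at this
  have hΔz_l : W.comul (W.antipode y) = (W.antipode y ⊗ₜ[k] (1 : H)) * W.e := by
    rw [hSy]; exact W.comul_etm_l y
  have hΔz_r : W.comul (W.antipode y) = W.e * (W.antipode y ⊗ₜ[k] (1 : H)) := by
    rw [hSy]; exact W.comul_etm_r y
  have SS' : W.antipode y * W.antipode y' = 1 := by
    rw [← W.antimult hy's hys, hy'y, W.S_one]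
  have S'S : W.antipode y' * W.antipode y = 1 := by
    rw [← W.antimult hys hy's, hyy', W.S_one]
  -- the exchange identities
  have K : (y ⊗ₜ[k] (1 : H)) * W.e = ((1 : H) ⊗ₜ[k] W.antipode y) * W.e := by
    have := W.A2 y
    rw [← hSy, hS2] at this
    exact this.symm
  have K2y' : W.e * (y' ⊗ₜ[k] (1 : H)) = W.e * ((1 : H) ⊗ₜ[k] W.antipode y') := by
    have := W.K2 y'
    rwa [hy's] at this
  -- the comultiplication of g
  have hΔg : W.comul (W.antipode y * y') =
      (W.antipode y ⊗ₜ[k] (1 : H)) * (W.e * ((1 : H) ⊗ₜ[k] y')) := by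
    rw [W.comul_mul, hΔz_l, hΔy'_l, mul_assoc, ← mul_assoc W.e, W.e_mul_e]
  have hgg : (W.antipode y * y') ⊗ₜ[k] (W.antipode y * y') =
      (W.antipode y ⊗ₜ[k] (1 : H)) * ((y' ⊗ₜ[k] W.antipode y) * ((1 : H) ⊗ₜ[k] y')) := by
    rw [Algebra.TensorProduct.tmul_mul_tmul, Algebra.TensorProduct.tmul_mul_tmul,
      one_mul, mul_one]
  have hP1 : (y' ⊗ₜ[k] W.antipode y) * W.e = W.e := by
    have hd : (y' ⊗ₜ[k] W.antipode y) = (y' ⊗ₜ[k] (1 : H)) * ((1 : H) ⊗ₜ[k] W.antipode y) := by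
      rw [Algebra.TensorProduct.tmul_mul_tmul, one_mul, mul_one]
    rw [hd, mul_assoc, ← K, ← mul_assoc, Algebra.TensorProduct.tmul_mul_tmul, hy'y,
      one_mul, ← Algebra.TensorProduct.one_def, one_mul]
  have hP2 : W.e * (y' ⊗ₜ[k] W.antipode y) = W.e := by
    have hd : (y' ⊗ₜ[k] W.antipode y) = (y' ⊗ₜ[k] (1 : H)) * ((1 : H) ⊗ₜ[k] W.antipode y) := by
      rw [Algebra.TensorProduct.tmul_mul_tmul, one_mul, mul_one]
    rw [hd, ← mul_assoc, K2y', mul_assoc, Algebra.TensorProduct.tmul_mul_tmul, S'S,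
      one_mul, ← Algebra.TensorProduct.one_def, mul_one]
  refine ⟨?_, ?_, ?_⟩
  · exact ⟨⟨W.antipode y * y', y * W.antipode y', by
      rw [mul_assoc, ← mul_assoc y', hy'y, one_mul, SS'], by
      rw [mul_assoc, ← mul_assoc (W.antipode y'), S'S, one_mul, hyy']⟩, rfl⟩
  · -- Δg = (g ⊗ g)Δ1
    show W.comul (W.antipode y * y') =
      ((W.antipode y * y') ⊗ₜ[k] (W.antipode y * y')) * W.comul 1
    rw [hΔg, hgg]
    show _ = _ * W.e
    rw [mul_assoc, mul_assoc, show ((1 : H) ⊗ₜ[k] y') * W.e = W.e * ((1 : H) ⊗ₜ[k] y') by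
      rw [← hΔy'_l, ← hΔy'_r], ← mul_assoc (y' ⊗ₜ[k] W.antipode y), hP1]
  · -- Δg = Δ1 (g ⊗ g)
    show W.comul (W.antipode y * y') =
      W.comul 1 * ((W.antipode y * y') ⊗ₜ[k] (W.antipode y * y'))
    rw [hΔg, hgg]
    show _ = W.e * _
    rw [← mul_assoc W.e, show W.e * (W.antipode y ⊗ₜ[k] (1 : H)) =
        (W.antipode y ⊗ₜ[k] (1 : H)) * W.e by rw [← hΔz_l, ← hΔz_r],
      mul_assoc, ← mul_assoc W.e, hP2]
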